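/- On the two-dimensional logical subspace spanned by |0_L⟩ = (1/√2)(|010⟩-|100⟩) and |1_L⟩ = (1/√6)(2|001⟩-|100⟩-|010⟩), the linear combination -(1/√3)S₁₂ - (2/√3)S₁₃ of swap operators acts as the Pauli X matrix, and -S₁₂ acts as the Pauli Z matrix. -/
import Mathlib


noncomputable section

set_option maxHeartbeats 1000000

abbrev Q3 := Fin 2 × Fin 2 × Fin 2

/-- Swap of tensor factors 1 and 2. -/
def S12 : (Q3 → ℂ) →ₗ[ℂ] (Q3 → ℂ) :=
  LinearMap.funLeft ℂ ℂ fun x : Q3 => (x.2.1, x.1, x.2.2)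

/-- Swap of tensor factors 1 and 3. -/
def S13 : (Q3 → ℂ) →ₗ[ℂ] (Q3 → ℂ) :=
  LinearMap.funLeft ℂ ℂ fun x : Q3 => (x.2.2, x.2.1, x.1)

def ket (a b c : Fin 2) : Q3 → ℂ := fun x => if x = (a, b, c) then 1 else 0

def v0 : Q3 → ℂ := ((Real.sqrt 2 : ℂ))⁻¹ • (ket 0 1 0 - ket 1 0 0)

def v1 : Q3 → ℂ := ((Real.sqrt 6 : ℂ))⁻¹ • ((2 : ℂ) • ket 0 0 1 - ket 1 0 0 - ket 0 1 0)

/-- with respect to the ordered basis `(|0_L⟩, |1_L⟩)`, the operator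
`-(1/√3)S₁₂ - (2/√3)S₁₃` acts as Pauli `X` and `-S₁₂` acts as Pauli `Z`. -/
theorem stmt4 :
    ((-(Real.sqrt 3 : ℂ)⁻¹) • S12 - ((2 : ℂ) * (Real.sqrt 3 : ℂ)⁻¹) • S13) v0 = v1
    ∧ ((-(Real.sqrt 3 : ℂ)⁻¹) • S12 - ((2 : ℂ) * (Real.sqrt 3 : ℂ)⁻¹) • S13) v1 = v0
    ∧ (-S12) v0 = v0
    ∧ (-S12) v1 = -v1 := by
  have h2 : ((Real.sqrt 2 : ℂ)) ≠ 0 := by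
    simp [Real.sqrt_ne_zero'.mpr (by norm_num : (0:ℝ) < 2)]
  have h3 : ((Real.sqrt 3 : ℂ)) ≠ 0 := by
    simp [Real.sqrt_ne_zero'.mpr (by norm_num : (0:ℝ) < 3)]
  have h6 : ((Real.sqrt 6 : ℂ)) ≠ 0 := by
    simp [Real.sqrt_ne_zero'.mpr (by norm_num : (0:ℝ) < 6)]
  have hm : (Real.sqrt 2 : ℂ) * (Real.sqrt 3 : ℂ) = (Real.sqrt 6 : ℂ) := by
    rw [← Complex.ofReal_mul, ← Real.sqrt_mul (by norm_num)]
    norm_num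
  have hsq : (Real.sqrt 3 : ℂ) ^ 2 = 3 := by
    rw [← Complex.ofReal_pow, Real.sq_sqrt (by norm_num)]; norm_num
  refine ⟨?_, ?_, ?_, ?_⟩ <;>
  · funext x
    obtain ⟨a, b, c⟩ := x
    fin_cases a <;> fin_cases b <;> fin_cases c <;>
    · simp only [LinearMap.sub_apply, LinearMap.smul_apply, LinearMap.neg_apply, S12, S13,
        LinearMap.funLeft_apply, v0, v1, ket, Pi.sub_apply, Pi.smul_apply, Pi.neg_apply,
        smul_eq_mul, Prod.mk.injEq]
      try norm_num
      try field_simp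
      try rw [← hm]
      try ring_nf
      try rw [hsq]
      try ring

end
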